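/- Let X be a connected nodal curve (equivalently, a connected bridgeless graph Γ = Γ_X) free from separating nodes, and let S and T be two distinct C1-sets. Then T is entirely contained in the edge set of a unique connected component of Γ \ S. -/

import Mathlib

structure Multigraph (V E : Type) where
  ends : E → Sym2 V

namespace Multigraph

variable {V E : Type} (G : Multigraph V E)

def adjOn (F : Set E) (v w : V) : Prop := ∃ e ∈ F, G.ends e = s(v, w)

def ConnectedOn (F : Set E) : Prop := ∀ v w : V, Relation.ReflTransGen (G.adjOn F) v w

def Connected : Prop := G.ConnectedOn Set.univ

def Bridgeless : Prop := ∀ e : E, G.ConnectedOn ({e} : Set E)ᶜ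

def SameC1 (e f : E) : Prop := e = f ∨ ¬ G.ConnectedOn ({e, f} : Set E)ᶜ

def IsC1Set (S : Set E) : Prop := ∃ e : E, S = {f | G.SameC1 e f}

def compRel (S : Set E) (v w : V) : Prop := ∃ e ∉ S, G.ends e = s(v, w)

def contract (S : Set E) : Multigraph (Quot (G.compRel S)) {e // e ∈ S} :=
  ⟨fun e => (G.ends e.1).map (Quot.mk (G.compRel S))⟩

noncomputable def degree (v : V) : ℕ :=
  Nat.card {e : E // v ∈ G.ends e ∧ G.ends e ≠ s(v, v)} +
    2 * Nat.card {e : E // G.ends e = s(v, v)}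

def IsCycleGraph : Prop :=
  G.Connected ∧ 1 ≤ Nat.card E ∧ Nat.card E = Nat.card V ∧ ∀ v : V, G.degree v = 2

noncomputable def numComponents : ℕ := Nat.card (Quot (G.compRel (∅ : Set E)))

noncomputable def b1 : ℤ := (Nat.card E : ℤ) - (Nat.card V : ℤ) + (G.numComponents : ℤ)

end Multigraph


namespace Multigraph

variable {V E : Type} (G : Multigraph V E)

lemma sym2_rep {α : Type*} (z : Sym2 α) : ∃ p q, z = s(p, q) :=
  Sym2.ind (f := fun z => ∃ p q, z = s(p, q)) (fun p q => ⟨p, q, rfl⟩) z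

lemma mem_compl_pair {α : Type*} {e x y : α} (h1 : e ≠ x) (h2 : e ≠ y) :
    e ∈ ({x, y} : Set α)ᶜ := by
  simp only [Set.mem_compl_iff, Set.mem_insert_iff, Set.mem_singleton_iff, not_or]
  exact ⟨h1, h2⟩

lemma pairFalse (D : V → Prop) (x1 x2 p q : V) (h : s(x1, x2) = s(p, q))
    (h1 : ¬ D x1) (h2 : ¬ D x2) : D p ↔ D q := by
  rcases Sym2.eq_iff.mp h with ⟨rfl, rfl⟩ | ⟨rfl, rfl⟩
  · exact iff_of_false h1 h2
  · exact iff_of_false h2 h1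

lemma adjOn_symm {F : Set E} {v w : V} (h : G.adjOn F v w) : G.adjOn F w v := by
  obtain ⟨e, he, hee⟩ := h; exact ⟨e, he, by rw [hee, Sym2.eq_swap]⟩

lemma rtg_symm {F : Set E} {v w : V} (h : Relation.ReflTransGen (G.adjOn F) v w) :
    Relation.ReflTransGen (G.adjOn F) w v :=
  (@Relation.ReflTransGen.symmetric _ _ ⟨fun _ _ hh => G.adjOn_symm hh⟩).symm _ _ h

lemma detour (K : Set E) (x : E) {a b : V}
    (h : Relation.ReflTransGen (G.adjOn Kᶜ) a b) :
    Relation.ReflTransGen (G.adjOn (insert x K)ᶜ) a b ∨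
      ∃ v, v ∈ G.ends x ∧ Relation.ReflTransGen (G.adjOn (insert x K)ᶜ) a v := by
  induction h with
  | refl => exact Or.inl .refl
  | @tail b c hab hbc ih =>
    obtain ⟨e, he, hee⟩ := hbc
    by_cases hex : e = x
    · rcases ih with ih | ih
      · exact Or.inr ⟨b, by rw [← hex, hee]; exact Sym2.mem_mk_left _ _, ih⟩
      · exact Or.inr ih
    · have hstep : G.adjOn (insert x K)ᶜ b c :=
        ⟨e, by simp only [Set.mem_compl_iff, Set.mem_insert_iff, not_or]; exact ⟨hex, he⟩, hee⟩
      rcases ih with ih | ih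
      · exact Or.inl (ih.tail hstep)
      · exact Or.inr ih

lemma invar (K : Set E) (P : V → Prop)
    (hP : ∀ e ∉ K, ∀ p q : V, G.ends e = s(p, q) → (P p ↔ P q)) {a b : V}
    (h : Relation.ReflTransGen (G.adjOn Kᶜ) a b) : P a ↔ P b := by
  induction h with
  | refl => exact Iff.rfl
  | tail hab hbc ih => obtain ⟨e, he, hee⟩ := hbc; exact ih.trans (hP e he _ _ hee)

/-- Within the cut `{x, y}`, every vertex reaches an endpoint of `x`. -/
lemma reach_pair (hbl : G.Bridgeless) (x y : E) {x1 x2 : V} (hx : G.ends x = s(x1, x2))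
    (v : V) :
    Relation.ReflTransGen (G.adjOn ({x, y} : Set E)ᶜ) v x1 ∨
      Relation.ReflTransGen (G.adjOn ({x, y} : Set E)ᶜ) v x2 := by
  rcases G.detour {y} x (hbl y v x1) with h | ⟨w, hw, h⟩
  · exact Or.inl h
  · rw [hx, Sym2.mem_iff] at hw
    rcases hw with rfl | rfl
    · exact Or.inl h
    · exact Or.inr h

lemma not_reach (hbl : G.Bridgeless) (x y : E) {x1 x2 : V} (hx : G.ends x = s(x1, x2))
    (hd : ¬ G.ConnectedOn ({x, y} : Set E)ᶜ) :
    ¬ Relation.ReflTransGen (G.adjOn ({x, y} : Set E)ᶜ) x1 x2 := by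
  intro h
  refine hd fun v w => ?_
  have hv := G.reach_pair hbl x y hx v
  have hw := G.reach_pair hbl x y hx w
  have h1 : ∀ u : V, Relation.ReflTransGen (G.adjOn ({x, y} : Set E)ᶜ) u x1 := by
    intro u
    rcases G.reach_pair hbl x y hx u with hu | hu
    · exact hu
    · exact hu.trans (G.rtg_symm h)
  exact (h1 v).trans (G.rtg_symm (h1 w))

lemma cross (hbl : G.Bridgeless) (x y : E) {x1 x2 : V} (hx : G.ends x = s(x1, x2))
    (hd : ¬ G.ConnectedOn ({x, y} : Set E)ᶜ) :
    ∃ p q, G.ends y = s(p, q) ∧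
      Relation.ReflTransGen (G.adjOn ({x, y} : Set E)ᶜ) p x1 ∧
      ¬ Relation.ReflTransGen (G.adjOn ({x, y} : Set E)ᶜ) q x1 := by
  obtain ⟨y1, y2, hy⟩ : ∃ p q, G.ends y = s(p, q) := Sym2.ind (fun p q => ⟨p, q, rfl⟩) (G.ends y)
  have hx12 : ¬ Relation.ReflTransGen (G.adjOn ({x, y} : Set E)ᶜ) x1 x2 :=
    G.not_reach hbl x y hx hd
  have hy12 : ¬ Relation.ReflTransGen (G.adjOn ({x, y} : Set E)ᶜ) y1 y2 := by
    have := G.not_reach hbl y x hy (by rwa [Set.pair_comm])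
    rwa [Set.pair_comm y x] at this
  have hr1 := G.reach_pair hbl x y hx y1
  have hr2 := G.reach_pair hbl x y hx y2
  rcases hr1 with h1 | h1
  · refine ⟨y1, y2, hy, h1, fun h2 => hy12 (h1.trans (G.rtg_symm h2))⟩
  · rcases hr2 with h2 | h2
    · refine ⟨y2, y1, by rw [hy, Sym2.eq_swap], h2, fun h3 => hx12 ((G.rtg_symm h3).trans h1)⟩
    · exact absurd (h1.trans (G.rtg_symm h2)) hy12

lemma sameC1_symm {a b : E} (h : G.SameC1 a b) : G.SameC1 b a := by
  rcases h with rfl | h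
  · exact Or.inl rfl
  · exact Or.inr (by rwa [Set.pair_comm])

lemma sameC1_trans (hbl : G.Bridgeless) {a b c : E}
    (h1 : G.SameC1 a b) (h2 : G.SameC1 b c) : G.SameC1 a c := by
  rcases h1 with rfl | hab
  · exact h2
  rcases h2 with rfl | hbc
  · exact Or.inr hab
  by_cases hac : a = c
  · exact Or.inl hac
  by_cases haeb : a = b
  · subst haeb; exact Or.inr hbc
  by_cases hbec : b = c
  · subst hbec; exact Or.inr hab
  refine Or.inr ?_
  obtain ⟨a1, a2, ha⟩ : ∃ p q, G.ends a = s(p, q) := sym2_rep _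
  obtain ⟨b1, b2, hb, hb1, hb2⟩ := G.cross hbl a b ha hab
  obtain ⟨c1, c2, hc, hc1, hc2⟩ := G.cross hbl b c hb hbc
  -- A v := Rab v a1 ; B v := Rbc v b1 ; D v := A v ↔ ¬ B v
  have hb1B : Relation.ReflTransGen (G.adjOn ({b, c} : Set E)ᶜ) b1 b1 := .refl
  have hb2B : ¬ Relation.ReflTransGen (G.adjOn ({b, c} : Set E)ᶜ) b2 b1 :=
    fun h => G.not_reach hbl b c hb hbc (G.rtg_symm h)
  -- c's endpoints lie on the same side of the cut {a, b}
  have hcstep : Relation.ReflTransGen (G.adjOn ({a, b} : Set E)ᶜ) c1 c2 :=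
    Relation.ReflTransGen.single
      ⟨c, mem_compl_pair (fun h => hac h.symm) (fun h => hbec h.symm), hc⟩
  have hcA : Relation.ReflTransGen (G.adjOn ({a, b} : Set E)ᶜ) c1 a1 ↔
      Relation.ReflTransGen (G.adjOn ({a, b} : Set E)ᶜ) c2 a1 :=
    ⟨fun h => (G.rtg_symm hcstep).trans h, fun h => hcstep.trans h⟩
  -- the symmetric difference predicate
  set D : V → Prop := fun v =>
    (Relation.ReflTransGen (G.adjOn ({a, b} : Set E)ᶜ) v a1 ↔
      ¬ Relation.ReflTransGen (G.adjOn ({b, c} : Set E)ᶜ) v b1) with hDdef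
  have hDb1 : ¬ D b1 := fun hD => (hD.mp hb1) hb1B
  have hDb2 : ¬ D b2 := fun hD => hb2 (hD.mpr hb2B)
  have hv : ∃ v, D v := by
    by_cases hc1A : Relation.ReflTransGen (G.adjOn ({a, b} : Set E)ᶜ) c1 a1
    · exact ⟨c2, iff_of_true (hcA.mp hc1A) hc2⟩
    · exact ⟨c1, iff_of_false hc1A (not_not_intro hc1)⟩
  obtain ⟨v, hvD⟩ := hv
  intro hcon
  have spec : ∀ e ∉ ({a, c} : Set E), ∀ p q : V, G.ends e = s(p, q) → (D p ↔ D q) := by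
    intro e he p q hepq
    simp only [Set.mem_insert_iff, Set.mem_singleton_iff, not_or] at he
    by_cases heb : e = b
    · subst heb
      rw [hb] at hepq
      rcases Sym2.eq_iff.mp hepq with ⟨h1, h2⟩ | ⟨h1, h2⟩ <;> subst h1 <;> subst h2
      · exact iff_of_false hDb1 hDb2
      · exact iff_of_false hDb2 hDb1
    · have hstepA : Relation.ReflTransGen (G.adjOn ({a, b} : Set E)ᶜ) p q :=
        Relation.ReflTransGen.single
          ⟨e, mem_compl_pair he.1 heb, hepq⟩
      have hstepB : Relation.ReflTransGen (G.adjOn ({b, c} : Set E)ᶜ) p q :=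
        Relation.ReflTransGen.single
          ⟨e, mem_compl_pair heb he.2, hepq⟩
      have hA : Relation.ReflTransGen (G.adjOn ({a, b} : Set E)ᶜ) p a1 ↔
          Relation.ReflTransGen (G.adjOn ({a, b} : Set E)ᶜ) q a1 :=
        ⟨fun h => (G.rtg_symm hstepA).trans h, fun h => hstepA.trans h⟩
      have hB : Relation.ReflTransGen (G.adjOn ({b, c} : Set E)ᶜ) p b1 ↔
          Relation.ReflTransGen (G.adjOn ({b, c} : Set E)ᶜ) q b1 :=
        ⟨fun h => (G.rtg_symm hstepB).trans h, fun h => hstepB.trans h⟩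
      simp only [hDdef]
      exact iff_congr hA (not_congr hB)
  exact hDb1 ((G.invar {a, c} D spec (hcon v b1)).mp hvD)

lemma step_closed {K : Set E} {p q t : V} (h : G.adjOn Kᶜ p q) :
    Relation.ReflTransGen (G.adjOn Kᶜ) p t ↔ Relation.ReflTransGen (G.adjOn Kᶜ) q t :=
  ⟨fun hh => (G.rtg_symm (Relation.ReflTransGen.single h)).trans hh,
   fun hh => (Relation.ReflTransGen.single h).trans hh⟩

lemma class_eq (hbl : G.Bridgeless) {S : Set E} (hS : G.IsC1Set S) {f : E} (hf : f ∈ S) :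
    S = {h | G.SameC1 f h} := by
  obtain ⟨e, rfl⟩ := hS
  ext g
  simp only [Set.mem_setOf_eq] at hf ⊢
  exact ⟨fun hg => G.sameC1_trans hbl (G.sameC1_symm hf) hg,
         fun hg => G.sameC1_trans hbl hf hg⟩

lemma escape (S K : Set E) (P : V → Prop)
    (hclosed : ∀ p q, G.adjOn Kᶜ p q → (P p ↔ P q))
    (hP : ∀ s ∈ S, ∀ p : V, p ∈ G.ends s → P p)
    {a b : V} (h : Relation.ReflTransGen (G.adjOn Kᶜ) a b) (ha : ¬ P a) :
    Relation.ReflTransGen (G.compRel S) a b := by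
  revert ha
  induction h using Relation.ReflTransGen.head_induction_on with
  | refl => exact fun _ => .refl
  | head hstep htail ih =>
    intro ha
    obtain ⟨e, he, hee⟩ := hstep
    have heS : e ∉ S := fun heS => ha (hP e heS _ (by rw [hee]; exact Sym2.mem_mk_left _ _))
    have hPc : ¬ P _ := fun hc => ha ((hclosed _ _ ⟨e, he, hee⟩).mpr hc)
    exact Relation.ReflTransGen.head ⟨e, heS, hee⟩ (ih hPc)

lemma rtg_quot {S : Set E} {a b : V} (h : Relation.ReflTransGen (G.compRel S) a b) :
    Quot.mk (G.compRel S) a = Quot.mk (G.compRel S) b := by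
  induction h with
  | refl => rfl
  | tail _ hbc ih => exact ih.trans (Quot.sound hbc)

end Multigraph

/-- Let Γ be a finite connected multigraph with no separating edges
(dual graph of a nodal curve free from separating nodes) and let S and T be two distinct
C1-sets. Then T is entirely contained in a unique connected component of Γ \ S. -/
theorem stmt4 {V E : Type} [Finite V] [Finite E] (G : Multigraph V E)
    (hconn : G.Connected) (hbl : G.Bridgeless) (S T : Set E)
    (hS : G.IsC1Set S) (hT : G.IsC1Set T) (hST : S ≠ T) :
    ∃! c : Quot (G.compRel S),
      ∀ f ∈ T, ∀ v : V, v ∈ G.ends f → Quot.mk (G.compRel S) v = c := by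
  classical
  obtain ⟨eT, hTdef⟩ := hT
  have heT : eT ∈ T := by rw [hTdef]; exact Set.mem_setOf_eq ▸ Or.inl rfl
  have hdisj : ∀ x, x ∈ T → x ∉ S := by
    intro x hxT hxS
    exact hST ((G.class_eq hbl hS hxS).trans (G.class_eq hbl ⟨eT, hTdef⟩ hxT).symm)
  obtain ⟨u0, v0, h0⟩ := Multigraph.sym2_rep (G.ends eT)
  have heTS : eT ∉ S := hdisj eT heT
  have key : ∀ f ∈ T, ∀ v, v ∈ G.ends f → Relation.ReflTransGen (G.compRel S) v u0 := by
    intro f hf v hv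
    have hfS : f ∉ S := hdisj f hf
    have hfT : G.SameC1 eT f := by rw [hTdef] at hf; exact hf
    rcases hfT with rfl | hd
    · rw [h0, Sym2.mem_iff] at hv
      rcases hv with rfl | rfl
      · exact .refl
      · exact .single ⟨eT, heTS, by rw [h0, Sym2.eq_swap]⟩
    · obtain ⟨u1, v1, h1, hu1, hv1⟩ := G.cross hbl eT f h0 hd
      have hXclosed : ∀ p q : V, G.adjOn ({eT, f} : Set E)ᶜ p q →
          (Relation.ReflTransGen (G.adjOn ({eT, f} : Set E)ᶜ) p u0 ↔
           Relation.ReflTransGen (G.adjOn ({eT, f} : Set E)ᶜ) q u0) :=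
        fun p q hpq => G.step_closed hpq
      have hstepTF : ∀ s ∈ S, ∀ p q : V, G.ends s = s(p, q) →
          G.adjOn ({eT, f} : Set E)ᶜ p q := by
        intro s hs p q hpq
        exact ⟨s, Multigraph.mem_compl_pair (fun h => heTS (h ▸ hs)) (fun h => hfS (h ▸ hs)), hpq⟩
      have edge_side : ∀ s ∈ S, ∀ p q : V, G.ends s = s(p, q) →
          (Relation.ReflTransGen (G.adjOn ({eT, f} : Set E)ᶜ) p u0 ↔
           Relation.ReflTransGen (G.adjOn ({eT, f} : Set E)ᶜ) q u0) :=
        fun s hs p q hpq => hXclosed p q (hstepTF s hs p q hpq)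
      by_cases hall : ∀ s ∈ S, ∀ p, p ∈ G.ends s →
          Relation.ReflTransGen (G.adjOn ({eT, f} : Set E)ᶜ) p u0
      · -- all of S on the u0 side; escape from v1 through the other side
        have hv1v0 : Relation.ReflTransGen (G.adjOn ({eT, f} : Set E)ᶜ) v1 v0 := by
          rcases G.reach_pair hbl eT f h0 v1 with h | h
          · exact absurd h hv1
          · exact h
        have hesc := G.escape S {eT, f} _ hXclosed hall hv1v0 hv1
        have hv0u0 : Relation.ReflTransGen (G.compRel S) v0 u0 :=
          .single ⟨eT, heTS, by rw [h0, Sym2.eq_swap]⟩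
        have hv1u0 := hesc.trans hv0u0
        rw [h1, Sym2.mem_iff] at hv
        rcases hv with rfl | rfl
        · exact (Relation.ReflTransGen.single ⟨f, hfS, h1⟩).trans hv1u0
        · exact hv1u0
      · push_neg at hall
        obtain ⟨s2, hs2S, p2, hp2mem, hp2⟩ := hall
        obtain ⟨z1, z2, hz⟩ := Multigraph.sym2_rep (G.ends s2)
        have hz1 : ¬ Relation.ReflTransGen (G.adjOn ({eT, f} : Set E)ᶜ) z1 u0 := by
          have hiff := edge_side s2 hs2S z1 z2 hz
          rw [hz, Sym2.mem_iff] at hp2mem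
          rcases hp2mem with rfl | rfl
          · exact hp2
          · exact fun h => hp2 (hiff.mp h)
        have hz2 : ¬ Relation.ReflTransGen (G.adjOn ({eT, f} : Set E)ᶜ) z2 u0 :=
          fun h => hz1 ((edge_side s2 hs2S z1 z2 hz).mpr h)
        by_cases hall2 : ∀ s ∈ S, ∀ p, p ∈ G.ends s →
            ¬ Relation.ReflTransGen (G.adjOn ({eT, f} : Set E)ᶜ) p u0
        · -- all of S off the u0 side; escape from u1 on the u0 side
          have hesc := G.escape S {eT, f} _
            (fun p q h => not_congr (hXclosed p q h)) hall2 hu1 (not_not_intro hu1)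
          rw [h1, Sym2.mem_iff] at hv
          rcases hv with rfl | rfl
          · exact hesc
          · exact (Relation.ReflTransGen.single ⟨f, hfS, by rw [h1, Sym2.eq_swap]⟩).trans hesc
        · push_neg at hall2
          obtain ⟨s1, hs1S, p1, hp1mem, hp1⟩ := hall2
          exfalso
          obtain ⟨w1, w2, hw⟩ := Multigraph.sym2_rep (G.ends s1)
          have hw1 : Relation.ReflTransGen (G.adjOn ({eT, f} : Set E)ᶜ) w1 u0 := by
            rw [hw, Sym2.mem_iff] at hp1mem
            rcases hp1mem with rfl | rfl
            · exact hp1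
            · exact (edge_side s1 hs1S _ _ hw).mpr hp1
          have hw2 : Relation.ReflTransGen (G.adjOn ({eT, f} : Set E)ᶜ) w2 u0 :=
            (edge_side s1 hs1S w1 w2 hw).mp hw1
          have hs2z : ∀ p, p ∈ G.ends s2 → ¬ Relation.ReflTransGen (G.adjOn ({eT, f} : Set E)ᶜ) p u0 := by
            intro p hp
            rw [hz, Sym2.mem_iff] at hp
            rcases hp with rfl | rfl
            · exact hz1
            · exact hz2
          have hne : s1 ≠ s2 := fun h =>
            hs2z w1 (by rw [← h, hw]; exact Sym2.mem_mk_left _ _) hw1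
          have hsame : G.SameC1 s1 s2 := by
            have h' := hs2S
            rw [G.class_eq hbl hS hs1S] at h'
            exact h'
          have hds : ¬ G.ConnectedOn ({s1, s2} : Set E)ᶜ := hsame.resolve_left hne
          have hw12 : ¬ Relation.ReflTransGen (G.adjOn ({s1, s2} : Set E)ᶜ) w1 w2 :=
            G.not_reach hbl s1 s2 hw hds
          have hBclosed : ∀ p q : V, G.adjOn ({s1, s2} : Set E)ᶜ p q →
              (Relation.ReflTransGen (G.adjOn ({s1, s2} : Set E)ᶜ) p w1 ↔
               Relation.ReflTransGen (G.adjOn ({s1, s2} : Set E)ᶜ) q w1) :=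
            fun p q hpq => G.step_closed hpq
          have hv0X : ¬ Relation.ReflTransGen (G.adjOn ({eT, f} : Set E)ᶜ) v0 u0 :=
            fun h => (G.not_reach hbl eT f h0 hd) (G.rtg_symm h)
          -- shorthand predicates
          set X : V → Prop := fun v => Relation.ReflTransGen (G.adjOn ({eT, f} : Set E)ᶜ) v u0
            with hXdef
          set B : V → Prop := fun v => Relation.ReflTransGen (G.adjOn ({s1, s2} : Set E)ᶜ) v w1
            with hBdef
          have hw2B : ¬ B w2 := fun h => hw12 (G.rtg_symm h)
          have hw1B : B w1 := .refl
          -- common part of the crossing specification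
          have specCommon : ∀ (Bp : V → Prop),
              (∀ p q : V, G.adjOn ({s1, s2} : Set E)ᶜ p q → (Bp p ↔ Bp q)) →
              ∀ e : E, e ≠ s1 → e ≠ s2 → e ≠ eT → e ≠ f → ∀ p q : V,
              G.ends e = s(p, q) → ((X p ∧ Bp p) ↔ (X q ∧ Bp q)) := by
            intro Bp hBp e he1 he2 heT' hef p q hepq
            have hA : X p ↔ X q :=
              hXclosed p q ⟨e, Multigraph.mem_compl_pair heT' hef, hepq⟩
            have hB : Bp p ↔ Bp q :=
              hBp p q ⟨e, Multigraph.mem_compl_pair he1 he2, hepq⟩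
            exact and_congr hA hB
          by_cases hu0B : B u0 <;> by_cases hu1B : B u1
          · -- u0, u1 ∈ B : D = X ∧ ¬B has boundary {s1} only
            have spec : ∀ e ∉ ({s1} : Set E), ∀ p q : V, G.ends e = s(p, q) →
                ((X p ∧ ¬ B p) ↔ (X q ∧ ¬ B q)) := by
              intro e he p q hepq
              rw [Set.mem_singleton_iff] at he
              by_cases he2 : e = s2
              · subst he2
                exact Multigraph.pairFalse (fun v => X v ∧ ¬ B v) z1 z2 p q (hz ▸ hepq)
                  (fun h => hz1 h.1) (fun h => hz2 h.1)
              by_cases heT' : e = eT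
              · subst heT'
                exact Multigraph.pairFalse (fun v => X v ∧ ¬ B v) u0 v0 p q (h0 ▸ hepq)
                  (fun h => h.2 hu0B) (fun h => hv0X h.1)
              by_cases hef : e = f
              · subst hef
                exact Multigraph.pairFalse (fun v => X v ∧ ¬ B v) u1 v1 p q (h1 ▸ hepq)
                  (fun h => h.2 hu1B) (fun h => hv1 h.1)
              exact specCommon (fun v => ¬ B v)
                (fun p q h => not_congr (hBclosed p q h)) e he he2 heT' hef p q hepq
            have := (G.invar {s1} _ spec (hbl s1 w2 w1)).mp ⟨hw2, hw2B⟩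
            exact this.2 hw1B
          · -- u0 ∈ B, u1 ∉ B : D = X ∧ B has boundary {s1, eT}
            have spec : ∀ e ∉ ({s1, eT} : Set E), ∀ p q : V, G.ends e = s(p, q) →
                ((X p ∧ B p) ↔ (X q ∧ B q)) := by
              intro e he p q hepq
              have he' : e ≠ s1 ∧ e ≠ eT := by
                simpa [Set.mem_insert_iff, not_or] using he
              by_cases he2 : e = s2
              · subst he2
                exact Multigraph.pairFalse (fun v => X v ∧ B v) z1 z2 p q (hz ▸ hepq)
                  (fun h => hz1 h.1) (fun h => hz2 h.1)
              by_cases hef : e = f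
              · subst hef
                exact Multigraph.pairFalse (fun v => X v ∧ B v) u1 v1 p q (h1 ▸ hepq)
                  (fun h => hu1B h.2) (fun h => hv1 h.1)
              exact specCommon B hBclosed e he'.1 he2 he'.2 hef p q hepq
            have hcut : ¬ G.ConnectedOn ({s1, eT} : Set E)ᶜ := by
              intro hcon
              have := (G.invar {s1, eT} _ spec (hcon w1 w2)).mp ⟨hw1, hw1B⟩
              exact hw2B this.2
            have : eT ∈ S := by
              rw [G.class_eq hbl hS hs1S]
              exact Or.inr hcut
            exact heTS this
          · -- u0 ∉ B, u1 ∈ B : D = X ∧ B has boundary {s1, f}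
            have spec : ∀ e ∉ ({s1, f} : Set E), ∀ p q : V, G.ends e = s(p, q) →
                ((X p ∧ B p) ↔ (X q ∧ B q)) := by
              intro e he p q hepq
              have he' : e ≠ s1 ∧ e ≠ f := by
                simpa [Set.mem_insert_iff, not_or] using he
              by_cases he2 : e = s2
              · subst he2
                exact Multigraph.pairFalse (fun v => X v ∧ B v) z1 z2 p q (hz ▸ hepq)
                  (fun h => hz1 h.1) (fun h => hz2 h.1)
              by_cases heT' : e = eT
              · subst heT'
                exact Multigraph.pairFalse (fun v => X v ∧ B v) u0 v0 p q (h0 ▸ hepq)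
                  (fun h => hu0B h.2) (fun h => hv0X h.1)
              exact specCommon B hBclosed e he'.1 he2 heT' he'.2 p q hepq
            have hcut : ¬ G.ConnectedOn ({s1, f} : Set E)ᶜ := by
              intro hcon
              have := (G.invar {s1, f} _ spec (hcon w1 w2)).mp ⟨hw1, hw1B⟩
              exact hw2B this.2
            have : f ∈ S := by
              rw [G.class_eq hbl hS hs1S]
              exact Or.inr hcut
            exact hfS this
          · -- u0 ∉ B, u1 ∉ B : D = X ∧ B has boundary {s1} only
            have spec : ∀ e ∉ ({s1} : Set E), ∀ p q : V, G.ends e = s(p, q) →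
                ((X p ∧ B p) ↔ (X q ∧ B q)) := by
              intro e he p q hepq
              rw [Set.mem_singleton_iff] at he
              by_cases he2 : e = s2
              · subst he2
                exact Multigraph.pairFalse (fun v => X v ∧ B v) z1 z2 p q (hz ▸ hepq)
                  (fun h => hz1 h.1) (fun h => hz2 h.1)
              by_cases heT' : e = eT
              · subst heT'
                exact Multigraph.pairFalse (fun v => X v ∧ B v) u0 v0 p q (h0 ▸ hepq)
                  (fun h => hu0B h.2) (fun h => hv0X h.1)
              by_cases hef : e = f
              · subst hef
                exact Multigraph.pairFalse (fun v => X v ∧ B v) u1 v1 p q (h1 ▸ hepq)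
                  (fun h => hu1B h.2) (fun h => hv1 h.1)
              exact specCommon B hBclosed e he he2 heT' hef p q hepq
            have := (G.invar {s1} _ spec (hbl s1 w1 w2)).mp ⟨hw1, hw1B⟩
            exact hw2B this.2
  refine ⟨Quot.mk (G.compRel S) u0, ?_, ?_⟩
  · intro f hf v hv
    exact G.rtg_quot (key f hf v hv)
  · intro c hc
    exact (hc eT heT u0 (by rw [h0]; exact Sym2.mem_mk_left _ _)).symm
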